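/- Let L ⊆ C(0,0,0) be a lower set in Z^3 with U = C(0,0,0) \ L finite and nonempty (so (0,0,0) ∉ L). Then there exist i,j,k ≤ 0 such that (i,j,k) ∈ U while all seven points (i-1,j,k), (i,j-1,k), (i,j,k-1), (i,j-1,k-1), (i-1,j,k-1), (i-1,j-1,k), (i-1,j-1,k-1) lie in I = {(p,q,r) ∈ L : (p+1,q+1,r+1) ∉ L}. -/

import Mathlib

/-- The lower cone of a point in `ℤ³`. -/
def LowerCone (p : ℤ × ℤ × ℤ) : Set (ℤ × ℤ × ℤ) :=
  {q | q.1 ≤ p.1 ∧ q.2.1 ≤ p.2.1 ∧ q.2.2 ≤ p.2.2}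

/-- `L` is a lower set (order ideal) for the product order on `ℤ³`. -/
def IsLowerSet3 (L : Set (ℤ × ℤ × ℤ)) : Prop :=
  ∀ p ∈ L, LowerCone p ⊆ L

/-- The initial conditions determined by a lower set `L`. -/
def InitConds (L : Set (ℤ × ℤ × ℤ)) : Set (ℤ × ℤ × ℤ) :=
  {p ∈ L | (p.1 + 1, p.2.1 + 1, p.2.2 + 1) ∉ L}

/-- local minimum lemma: if `U = C(0,0,0) \ L` is finite and nonempty,
there is `(i,j,k) ∈ U` with `i,j,k ≤ 0` all seven of whose strict lower neighbors lie
in the initial conditions `I`. -/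
theorem stmt1 (L : Set (ℤ × ℤ × ℤ))
    (hlow : IsLowerSet3 L)
    (hsub : L ⊆ LowerCone (0, 0, 0))
    (hfin : (LowerCone (0, 0, 0) \ L).Finite)
    (hne : (LowerCone (0, 0, 0) \ L).Nonempty) :
    ∃ i j k : ℤ, i ≤ 0 ∧ j ≤ 0 ∧ k ≤ 0 ∧
      (i, j, k) ∈ LowerCone (0, 0, 0) \ L ∧
      (i - 1, j, k) ∈ InitConds L ∧
      (i, j - 1, k) ∈ InitConds L ∧
      (i, j, k - 1) ∈ InitConds L ∧
      (i, j - 1, k - 1) ∈ InitConds L ∧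
      (i - 1, j, k - 1) ∈ InitConds L ∧
      (i - 1, j - 1, k) ∈ InitConds L ∧
      (i - 1, j - 1, k - 1) ∈ InitConds L := by
  obtain ⟨⟨i, j, k⟩, hp, hmin⟩ :=
    Set.exists_min_image _ (fun q : ℤ × ℤ × ℤ => q.1 + q.2.1 + q.2.2) hfin hne
  obtain ⟨⟨hi, hj, hk⟩, hpL⟩ := hp
  simp only [LowerCone, Set.mem_setOf_eq] at hi hj hk
  have key : ∀ a b c : ℤ, a ≤ i → b ≤ j → c ≤ k → a + b + c < i + j + k →
      i ≤ a + 1 → j ≤ b + 1 → k ≤ c + 1 → (a, b, c) ∈ InitConds L := by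
    intro a b c ha hb hc hsum ha1 hb1 hc1
    have hmem : (a, b, c) ∈ L := by
      by_contra h
      have hmem2 : (a, b, c) ∈ LowerCone (0, 0, 0) \ L :=
        ⟨⟨by simp; omega, by simp; omega, by simp; omega⟩, h⟩
      have := hmin _ hmem2
      simp at this
      omega
    refine ⟨hmem, fun hL => hpL (hlow _ hL ⟨?_, ?_, ?_⟩)⟩ <;> simp <;> omega
  exact ⟨i, j, k, hi, hj, hk, ⟨⟨hi, hj, hk⟩, hpL⟩,
    key _ _ _ (by omega) (by omega) (by omega) (by omega) (by omega) (by omega) (by omega),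
    key _ _ _ (by omega) (by omega) (by omega) (by omega) (by omega) (by omega) (by omega),
    key _ _ _ (by omega) (by omega) (by omega) (by omega) (by omega) (by omega) (by omega),
    key _ _ _ (by omega) (by omega) (by omega) (by omega) (by omega) (by omega) (by omega),
    key _ _ _ (by omega) (by omega) (by omega) (by omega) (by omega) (by omega) (by omega),
    key _ _ _ (by omega) (by omega) (by omega) (by omega) (by omega) (by omega) (by omega),
    key _ _ _ (by omega) (by omega) (by omega) (by omega) (by omega) (by omega) (by omega)⟩
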